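/- arXiv:1810.01309 — 2 statements merged into one kernel-verified Lean document; each statement's English description precedes it below -/
import Mathlib

section
/- Let m > 0, a ∈ (0, m), ν = √(m²−a²)/m, and C ∈ ℂ². Define ψ_C^a = (φ_C^a, χ_C^a)ᵀ with φ_C^a(x) = C e^{−√(m²−a²)|x|}/|x|^{1−a/m} and χ_C^a = √((m−a)/(m+a)) (i σ·x̂) φ_C^a. Then ψ_C^a is a distributional solution of the Dirac–Coulomb eigenvalue equation (−i α·∇ + mβ − ν/|x| − a) ψ_C^a = 0 on ℝ³ \ {0}. -/
open Matrix MeasureTheory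

noncomputable section

/-- The Pauli matrices. -/
def Pauli : Fin 3 → Matrix (Fin 2) (Fin 2) ℂ :=
  ![!![0, 1; 1, 0], !![0, -Complex.I; Complex.I, 0], !![1, 0; 0, -1]]

/-- The Dirac matrix `β = diag(I₂, -I₂)`. -/
def diracBeta : Matrix (Fin 2 ⊕ Fin 2) (Fin 2 ⊕ Fin 2) ℂ := Matrix.fromBlocks 1 0 0 (-1)

/-- The Dirac matrices `α_j = [[0, σ_j], [σ_j, 0]]`. -/
def diracAlpha (j : Fin 3) : Matrix (Fin 2 ⊕ Fin 2) (Fin 2 ⊕ Fin 2) ℂ :=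
  Matrix.fromBlocks 0 (Pauli j) (Pauli j) 0

/-- `σ·x̂` for `x ≠ 0`, with `x̂ = x/|x|`. -/
def sigmaHat (x : EuclideanSpace ℝ (Fin 3)) : Matrix (Fin 2) (Fin 2) ℂ :=
  ∑ j, ((x j / ‖x‖ : ℝ) : ℂ) • Pauli j

/-- The `j`-th partial derivative of a 4-spinor field. -/
def pd (j : Fin 3) (ψ : EuclideanSpace ℝ (Fin 3) → (Fin 2 ⊕ Fin 2) → ℂ)
    (x : EuclideanSpace ℝ (Fin 3)) : (Fin 2 ⊕ Fin 2) → ℂ :=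
  fderiv ℝ ψ x (EuclideanSpace.single j 1)

/-- The Dirac kinetic operator `-i α·∇`. -/
def diracKin (ψ : EuclideanSpace ℝ (Fin 3) → (Fin 2 ⊕ Fin 2) → ℂ)
    (x : EuclideanSpace ℝ (Fin 3)) : (Fin 2 ⊕ Fin 2) → ℂ :=
  (-Complex.I) • ∑ j, (diracAlpha j).mulVec (pd j ψ x)


lemma hasFDerivAt_norm3 {x : EuclideanSpace ℝ (Fin 3)} (hx : x ≠ 0) :
    HasFDerivAt (fun y : EuclideanSpace ℝ (Fin 3) => ‖y‖) (‖x‖⁻¹ • innerSL ℝ x) x := by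
  have hr : 0 < ‖x‖ := norm_pos_iff.mpr hx
  have h2 : HasFDerivAt (fun y : EuclideanSpace ℝ (Fin 3) => ‖y‖ ^ 2)
      (2 • innerSL ℝ x) x := (hasStrictFDerivAt_norm_sq x).hasFDerivAt
  have hs : HasDerivAt Real.sqrt (1 / (2 * Real.sqrt (‖x‖ ^ 2))) (‖x‖ ^ 2) :=
    Real.hasDerivAt_sqrt (by positivity)
  have h := hs.comp_hasFDerivAt x h2
  have hfun : (fun y : EuclideanSpace ℝ (Fin 3) => Real.sqrt (‖y‖ ^ 2)) = fun y => ‖y‖ := by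
    funext y; exact Real.sqrt_sq (norm_nonneg y)
  rw [Function.comp_def, hfun] at h
  refine h.congr_fderiv ?_
  ext v
  simp [Real.sqrt_sq hr.le]
  field_simp

lemma hasDerivAt_g (k q r : ℝ) (hr : 0 < r) :
    HasDerivAt (fun t : ℝ => Real.exp (-k * t) / t ^ q)
      ((-k - q / r) * (Real.exp (-k * r) / r ^ q)) r := by
  have h1 : HasDerivAt (fun t : ℝ => Real.exp (-k * t)) (-k * Real.exp (-k * r)) r := by
    simpa [mul_comm] using ((hasDerivAt_id r).const_mul (-k)).exp
  have h2 : HasDerivAt (fun t : ℝ => t ^ q) (q * r ^ (q - 1)) r :=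
    Real.hasDerivAt_rpow_const (Or.inl hr.ne')
  have hne : r ^ q ≠ 0 := (Real.rpow_pos_of_pos hr q).ne'
  have h := h1.div h2 hne
  refine h.congr_deriv ?_
  rw [Real.rpow_sub hr, Real.rpow_one]
  field_simp

local notation "E3" => EuclideanSpace ℝ (Fin 3)

lemma hasFDerivAt_G (k q : ℝ) {x : E3} (hx : x ≠ 0) :
    HasFDerivAt (fun y : E3 => Real.exp (-k * ‖y‖) / ‖y‖ ^ q)
      (((-k - q / ‖x‖) * (Real.exp (-k * ‖x‖) / ‖x‖ ^ q) / ‖x‖) • innerSL ℝ x) x := by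
  have hr : 0 < ‖x‖ := norm_pos_iff.mpr hx
  have h := (hasDerivAt_g k q ‖x‖ hr).comp_hasFDerivAt x (hasFDerivAt_norm3 hx)
  rw [Function.comp_def] at h
  refine h.congr_fderiv ?_
  simp only [smul_smul, div_eq_mul_inv]

lemma innerSL_single (x : E3) (j : Fin 3) :
    innerSL ℝ x (EuclideanSpace.single j (1 : ℝ)) = x j := by
  rw [innerSL_apply_apply, EuclideanSpace.inner_single_right]
  simp

lemma diff_top (k q : ℝ) {x : E3} (hx : x ≠ 0) (z : ℂ) :
    DifferentiableAt ℝ (fun y : E3 => ((Real.exp (-k * ‖y‖) / ‖y‖ ^ q : ℝ) : ℂ) * z) x :=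
  ((Complex.ofRealCLM.hasFDerivAt.comp x (hasFDerivAt_G k q hx)).mul_const z).differentiableAt

lemma fderiv_top (k q : ℝ) {x : E3} (hx : x ≠ 0) (z : ℂ) (j : Fin 3) :
    fderiv ℝ (fun y : E3 => ((Real.exp (-k * ‖y‖) / ‖y‖ ^ q : ℝ) : ℂ) * z) x
        (EuclideanSpace.single j 1)
      = (((-k - q / ‖x‖) * (Real.exp (-k * ‖x‖) / ‖x‖ ^ q) / ‖x‖ * x j : ℝ) : ℂ) * z := by
  have h := (Complex.ofRealCLM.hasFDerivAt.comp x (hasFDerivAt_G k q hx)).mul_const z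
  simp only [Function.comp_def, Complex.ofRealCLM_apply] at h
  rw [h.fderiv]
  simp [innerSL_single x j]
  push_cast
  ring

lemma hasFDerivAt_proj (l : Fin 3) (x : E3) :
    HasFDerivAt (fun y : E3 => y l) (EuclideanSpace.proj l (𝕜 := ℝ)) x :=
  (EuclideanSpace.proj l (𝕜 := ℝ)).hasFDerivAt

lemma diff_bot (k q : ℝ) (l : Fin 3) {x : E3} (hx : x ≠ 0) (z : ℂ) :
    DifferentiableAt ℝ
      (fun y : E3 => ((y l * (Real.exp (-k * ‖y‖) / ‖y‖ ^ q) : ℝ) : ℂ) * z) x :=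
  ((Complex.ofRealCLM.hasFDerivAt.comp x
    (((hasFDerivAt_proj l x).mul (hasFDerivAt_G k q hx)))).mul_const z).differentiableAt

lemma fderiv_bot (k q : ℝ) (l : Fin 3) {x : E3} (hx : x ≠ 0) (z : ℂ) (j : Fin 3) :
    fderiv ℝ (fun y : E3 => ((y l * (Real.exp (-k * ‖y‖) / ‖y‖ ^ q) : ℝ) : ℂ) * z) x
        (EuclideanSpace.single j 1)
      = ((((if l = j then 1 else 0) * (Real.exp (-k * ‖x‖) / ‖x‖ ^ q)
          + x l * ((-k - q / ‖x‖) * (Real.exp (-k * ‖x‖) / ‖x‖ ^ q) / ‖x‖ * x j)) : ℝ) : ℂ)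
          * z := by
  have h := (Complex.ofRealCLM.hasFDerivAt.comp x
    (((hasFDerivAt_proj l x).mul (hasFDerivAt_G k q hx)))).mul_const z
  simp only [Function.comp_def, Complex.ofRealCLM_apply, Pi.mul_apply] at h
  rw [h.fderiv]
  by_cases hl : l = j <;>
    simp [innerSL_single x j, EuclideanSpace.single_apply, hl] <;> push_cast <;> ring

set_option maxHeartbeats 2000000 in
/-- **The Hardy attainers are Dirac–Coulomb eigenfunctions:** for `m > 0`, `0 < a < m`,
`ν = √(m²-a²)/m`, the spinor `ψ_C^a` solves `(-i α·∇ + mβ - ν/|x| - a) ψ_C^a = 0` on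
`ℝ³ \ {0}`. -/
theorem stmt_8 (m a : ℝ) (hm : 0 < m) (ha : a ∈ Set.Ioo (0 : ℝ) m) (C : Fin 2 → ℂ) :
    let ν : ℝ := Real.sqrt (m ^ 2 - a ^ 2) / m
    let φ : EuclideanSpace ℝ (Fin 3) → Fin 2 → ℂ := fun x =>
      ((Real.exp (-(Real.sqrt (m ^ 2 - a ^ 2)) * ‖x‖) / ‖x‖ ^ (1 - a / m) : ℝ) : ℂ) • C
    let χ : EuclideanSpace ℝ (Fin 3) → Fin 2 → ℂ := fun x =>
      (Real.sqrt ((m - a) / (m + a)) : ℝ) • (Complex.I • (sigmaHat x).mulVec (φ x))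
    let ψ : EuclideanSpace ℝ (Fin 3) → (Fin 2 ⊕ Fin 2) → ℂ := fun x =>
      Sum.elim (φ x) (χ x)
    ∀ x : EuclideanSpace ℝ (Fin 3), x ≠ 0 →
      diracKin ψ x + (m : ℂ) • diracBeta.mulVec (ψ x)
        - ((ν / ‖x‖ : ℝ) : ℂ) • ψ x - (a : ℂ) • ψ x = 0 := by
  intro ν φ χ ψ x hx
  obtain ⟨ha0, ham⟩ := ha
  have hm0 : m ≠ 0 := hm.ne'
  have hma : 0 < m - a := sub_pos.mpr ham
  have hpa : 0 < m + a := by linarith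
  have hνk : ν = Real.sqrt (m ^ 2 - a ^ 2) / m := rfl
  have hφd : ∀ y s, φ y s =
      ((Real.exp (-(Real.sqrt (m ^ 2 - a ^ 2)) * ‖y‖) / ‖y‖ ^ (1 - a / m) : ℝ) : ℂ) * C s :=
    fun y s => rfl
  have hχd : ∀ y s, χ y s = ((Real.sqrt ((m - a) / (m + a)) : ℝ) : ℂ) *
      (Complex.I * (sigmaHat y).mulVec (φ y) s) := by
    intro y s
    have h0 : χ y s = (Real.sqrt ((m - a) / (m + a)) : ℝ) •
        ((Complex.I • (sigmaHat y).mulVec (φ y)) s) := rfl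
    rw [h0, Pi.smul_apply, Complex.real_smul, smul_eq_mul]
  have hψd : ∀ y, ψ y = Sum.elim (φ y) (χ y) := fun y => rfl
  set k : ℝ := Real.sqrt (m ^ 2 - a ^ 2) with hk
  set c : ℝ := Real.sqrt ((m - a) / (m + a)) with hc
  set q : ℝ := 1 - a / m with hq
  have hk2 : k ^ 2 = m ^ 2 - a ^ 2 := Real.sq_sqrt (by nlinarith)
  have hkpos : 0 < k := Real.sqrt_pos.mpr (by nlinarith)
  have hcpos : 0 < c := Real.sqrt_pos.mpr (div_pos hma hpa)
  have hck : c * k = m - a := by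
    rw [hc, hk, ← Real.sqrt_mul (div_pos hma hpa).le]
    rw [show (m - a) / (m + a) * (m ^ 2 - a ^ 2) = (m - a) ^ 2 by field_simp; ring]
    exact Real.sqrt_sq hma.le
  have hcma : c * (m + a) = k := mul_right_cancel₀ hkpos.ne' (by nlinarith)
  have hνm : ν * m = k := by rw [hνk]; field_simp
  have hqm : q * m = m - a := by rw [hq]; field_simp
  have hc2q : c * (2 - q) = ν := mul_right_cancel₀ hm0 (by nlinarith)
  have hcν : c * ν = q := mul_right_cancel₀ hm0 (by nlinarith)
  have hr : (0:ℝ) < ‖x‖ := norm_pos_iff.mpr hx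
  have hr0 : ‖x‖ ≠ 0 := hr.ne'
  have hrq0 : ‖x‖ ^ q ≠ 0 := (Real.rpow_pos_of_pos hr q).ne'
  have hrq1 : ‖x‖ ^ (q + 1) = ‖x‖ ^ q * ‖x‖ := by rw [Real.rpow_add hr, Real.rpow_one]
  have hrq2 : ‖x‖ ^ (q + 2) = ‖x‖ ^ (q + 1) * ‖x‖ := by
    rw [show q + 2 = (q + 1) + 1 by ring, Real.rpow_add hr, Real.rpow_one]
  have hrq3 : ‖x‖ ^ (q + 3) = ‖x‖ ^ (q + 2) * ‖x‖ := by
    rw [show q + 3 = (q + 2) + 1 by ring, Real.rpow_add hr, Real.rpow_one]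
  have hxsum : x 0 ^ 2 + x 1 ^ 2 + x 2 ^ 2 = ‖x‖ ^ 2 := by
    have h1 : ‖x‖ = Real.sqrt (∑ i, x i ^ 2) := by
      rw [EuclideanSpace.norm_eq]; congr 1; apply Finset.sum_congr rfl; intro i _; simp [Real.norm_eq_abs, sq_abs]
    rw [h1, Real.sq_sqrt (by positivity)]
    simp [Fin.sum_univ_three]
  clear_value k c q ν φ χ ψ
  set Kv : Fin 3 → Fin 2 → ℂ := fun l s => (c : ℂ) * Complex.I * (Pauli l).mulVec C s with hKv
  set ψ' : EuclideanSpace ℝ (Fin 3) → (Fin 2 ⊕ Fin 2) → ℂ := fun y => Sum.elim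
    (fun s => ((Real.exp (-k * ‖y‖) / ‖y‖ ^ q : ℝ) : ℂ) * C s)
    (fun s => ∑ l, ((y l * (Real.exp (-k * ‖y‖) / ‖y‖ ^ (q + 1)) : ℝ) : ℂ) * Kv l s) with hψ'
  have hψeq : ∀ y, y ≠ 0 → ψ y = ψ' y := by
    intro y hy
    have hry : 0 < ‖y‖ := norm_pos_iff.mpr hy
    have hry0 : ‖y‖ ≠ 0 := hry.ne'
    have hryq : ‖y‖ ^ q ≠ 0 := (Real.rpow_pos_of_pos hry q).ne'
    have hyrq1 : ‖y‖ ^ (q + 1) = ‖y‖ ^ q * ‖y‖ := by rw [Real.rpow_add hry, Real.rpow_one]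
    funext i
    rcases i with s | s
    · rw [hψd, Sum.elim_inl, hφd, hψ']
      rfl
    · rw [hψd, Sum.elim_inr, hψ']
      simp only [Sum.elim_inr, hχd, hKv, sigmaHat, Matrix.mulVec, dotProduct, Matrix.sum_apply,
        Matrix.smul_apply, smul_eq_mul, Fin.sum_univ_three, Fin.sum_univ_two, hφd]
      rw [hyrq1]
      fin_cases s <;>
      · simp [Pauli]
        push_cast
        field_simp
        all_goals ring
  have hfeq : ψ =ᶠ[nhds x] ψ' := by
    filter_upwards [IsOpen.mem_nhds isOpen_compl_singleton hx] with y hy using hψeq y hy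
  have hdiff : ∀ i : Fin 2 ⊕ Fin 2, DifferentiableAt ℝ (fun y => ψ' y i) x := by
    rintro (s | s)
    · have h3 : (fun y => ψ' y (Sum.inl s)) =
          fun y : E3 => ((Real.exp (-k * ‖y‖) / ‖y‖ ^ q : ℝ) : ℂ) * C s := by
        funext y; rw [hψ']; rfl
      rw [h3]; exact diff_top k q hx (C s)
    · have h3 : (fun y => ψ' y (Sum.inr s)) = fun y : E3 =>
          ∑ l, ((y l * (Real.exp (-k * ‖y‖) / ‖y‖ ^ (q + 1)) : ℝ) : ℂ) * Kv l s := by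
        funext y; rw [hψ']; rfl
      rw [h3]; exact DifferentiableAt.fun_sum fun l _ => diff_bot k (q + 1) l hx (Kv l s)
  have hpd : ∀ j : Fin 3, pd j ψ x = Sum.elim
      (fun s => ((-(k * (Real.exp (-k * ‖x‖) / ‖x‖ ^ (q + 1)) + q * (Real.exp (-k * ‖x‖) / ‖x‖ ^ (q + 2))) * x j : ℝ) : ℂ) * C s)
      (fun s => ∑ l, (((if l = j then (Real.exp (-k * ‖x‖) / ‖x‖ ^ (q + 1)) else 0)
        - x l * x j * (k * (Real.exp (-k * ‖x‖) / ‖x‖ ^ (q + 2)) + (q + 1) * (Real.exp (-k * ‖x‖) / ‖x‖ ^ (q + 3))) : ℝ) : ℂ) * Kv l s) := by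
    intro j
    have h1 : pd j ψ x = fderiv ℝ ψ' x (EuclideanSpace.single j 1) := by
      show fderiv ℝ ψ x (EuclideanSpace.single j 1) = _
      rw [Filter.EventuallyEq.fderiv_eq hfeq]
    rw [h1]
    have h2 : fderiv ℝ ψ' x = ContinuousLinearMap.pi (fun i => fderiv ℝ (fun y => ψ' y i) x) :=
      fderiv_pi hdiff
    rw [h2]
    funext i
    rcases i with s | s
    · rw [ContinuousLinearMap.pi_apply, Sum.elim_inl]
      have h3 : (fun y => ψ' y (Sum.inl s)) =
          fun y : E3 => ((Real.exp (-k * ‖y‖) / ‖y‖ ^ q : ℝ) : ℂ) * C s := by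
        funext y; rw [hψ']; rfl
      rw [h3, fderiv_top k q hx (C s) j]
      have hid : (-k - q / ‖x‖) * (Real.exp (-k * ‖x‖) / ‖x‖ ^ q) / ‖x‖ * x j
          = -(k * (Real.exp (-k * ‖x‖) / ‖x‖ ^ (q + 1)) + q * (Real.exp (-k * ‖x‖) / ‖x‖ ^ (q + 2))) * x j := by
        rw [hrq2, hrq1]; field_simp; ring
      rw [hid]
    · rw [ContinuousLinearMap.pi_apply, Sum.elim_inr]
      have h3 : (fun y => ψ' y (Sum.inr s)) = fun y : E3 =>
          ∑ l, ((y l * (Real.exp (-k * ‖y‖) / ‖y‖ ^ (q + 1)) : ℝ) : ℂ) * Kv l s := by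
        funext y; rw [hψ']; rfl
      rw [h3]
      have h4 := fderiv_fun_sum (u := Finset.univ) fun l _ => diff_bot k (q + 1) l hx (Kv l s)
      rw [h4, ContinuousLinearMap.sum_apply]
      refine Finset.sum_congr rfl fun l _ => ?_
      rw [fderiv_bot k (q + 1) l hx (Kv l s) j]
      have hid : (if l = j then 1 else 0) * (Real.exp (-k * ‖x‖) / ‖x‖ ^ (q + 1))
          + x l * ((-k - (q + 1) / ‖x‖) * (Real.exp (-k * ‖x‖) / ‖x‖ ^ (q + 1)) / ‖x‖ * x j)
          = (if l = j then (Real.exp (-k * ‖x‖) / ‖x‖ ^ (q + 1)) else 0) - x l * x j * (k * (Real.exp (-k * ‖x‖) / ‖x‖ ^ (q + 2)) + (q + 1) * (Real.exp (-k * ‖x‖) / ‖x‖ ^ (q + 3))) := by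
        rw [hrq3, hrq2, hrq1]
        by_cases hlj : l = j <;> simp [hlj] <;> field_simp <;> ring
      rw [hid]
  have hrq1C : ((‖x‖ ^ (q + 1) : ℝ) : ℂ) = ((‖x‖ ^ q : ℝ) : ℂ) * (‖x‖ : ℂ) := by
    exact_mod_cast congrArg Complex.ofReal hrq1
  have hrq2C : ((‖x‖ ^ (q + 2) : ℝ) : ℂ) = ((‖x‖ ^ (q + 1) : ℝ) : ℂ) * (‖x‖ : ℂ) := by
    exact_mod_cast congrArg Complex.ofReal hrq2
  have hrq3C : ((‖x‖ ^ (q + 3) : ℝ) : ℂ) = ((‖x‖ ^ (q + 2) : ℝ) : ℂ) * (‖x‖ : ℂ) := by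
    exact_mod_cast congrArg Complex.ofReal hrq3
  have hRC : ((‖x‖ : ℝ) : ℂ) ≠ 0 := by exact_mod_cast hr0
  have hRQC : ((‖x‖ ^ q : ℝ) : ℂ) ≠ 0 := by exact_mod_cast hrq0
  have hxsC : ((x 0 : ℝ) : ℂ) ^ 2 + ((x 1 : ℝ) : ℂ) ^ 2 + ((x 2 : ℝ) : ℂ) ^ 2
      = ((‖x‖ : ℝ) : ℂ) ^ 2 := by exact_mod_cast hxsum
  have hckC : ((c : ℝ) : ℂ) * ((k : ℝ) : ℂ) = ((m : ℝ) : ℂ) - ((a : ℝ) : ℂ) := by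
    exact_mod_cast hck
  have hcmaC : ((c : ℝ) : ℂ) * (((m : ℝ) : ℂ) + ((a : ℝ) : ℂ)) = ((k : ℝ) : ℂ) := by
    exact_mod_cast hcma
  have hc2qC : ((c : ℝ) : ℂ) * (2 - ((q : ℝ) : ℂ)) = ((ν : ℝ) : ℂ) := by exact_mod_cast hc2q
  have hcνC : ((c : ℝ) : ℂ) * ((ν : ℝ) : ℂ) = ((q : ℝ) : ℂ) := by exact_mod_cast hcν
  have hI3 : Complex.I ^ 3 = -Complex.I := by
    rw [pow_succ, Complex.I_sq]; ring
  have hI4 : Complex.I ^ 4 = 1 := by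
    rw [show (4:ℕ) = 2*2 from rfl, pow_mul, Complex.I_sq]; norm_num
  have hU21 : (Complex.exp (-((k:ℂ) * ((‖x‖:ℝ):ℂ))) / ((‖x‖ ^ (q+1) : ℝ) : ℂ)) * ((‖x‖:ℝ):ℂ) = (Complex.exp (-((k:ℂ) * ((‖x‖:ℝ):ℂ))) / ((‖x‖ ^ q : ℝ) : ℂ)) := by
    rw [hrq1C]; field_simp; try ring
  have hU32 : (Complex.exp (-((k:ℂ) * ((‖x‖:ℝ):ℂ))) / ((‖x‖ ^ (q+2) : ℝ) : ℂ)) * ((‖x‖:ℝ):ℂ) = (Complex.exp (-((k:ℂ) * ((‖x‖:ℝ):ℂ))) / ((‖x‖ ^ (q+1) : ℝ) : ℂ)) := by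
    rw [hrq2C, hrq1C]; field_simp; try ring
  have hU43 : (Complex.exp (-((k:ℂ) * ((‖x‖:ℝ):ℂ))) / ((‖x‖ ^ (q+3) : ℝ) : ℂ)) * ((‖x‖:ℝ):ℂ) = (Complex.exp (-((k:ℂ) * ((‖x‖:ℝ):ℂ))) / ((‖x‖ ^ (q+2) : ℝ) : ℂ)) := by
    rw [hrq3C, hrq2C, hrq1C]; field_simp; try ring
  have hdiv1 : (Complex.exp (-((k:ℂ) * ((‖x‖:ℝ):ℂ))) / ((‖x‖ ^ q : ℝ) : ℂ)) / ((‖x‖:ℝ):ℂ) = (Complex.exp (-((k:ℂ) * ((‖x‖:ℝ):ℂ))) / ((‖x‖ ^ (q+1) : ℝ) : ℂ)) := by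
    rw [hrq1C]; field_simp; try ring
  have hdiv2 : (Complex.exp (-((k:ℂ) * ((‖x‖:ℝ):ℂ))) / ((‖x‖ ^ (q+1) : ℝ) : ℂ)) / ((‖x‖:ℝ):ℂ) = (Complex.exp (-((k:ℂ) * ((‖x‖:ℝ):ℂ))) / ((‖x‖ ^ (q+2) : ℝ) : ℂ)) := by
    rw [hrq2C, hrq1C]; field_simp; try ring
  clear_value Kv ψ'
  funext i
  simp only [Pi.add_apply, Pi.sub_apply, Pi.smul_apply, Pi.zero_apply, smul_eq_mul,
    diracKin, Finset.sum_apply, hpd, hψeq x hx, hψ', neg_mul]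
  rcases i with s | s <;> fin_cases s <;>
    simp [diracAlpha, diracBeta, Matrix.mulVec, dotProduct, Fintype.sum_sum_type,
      Matrix.fromBlocks_apply₁₁, Matrix.fromBlocks_apply₁₂, Matrix.fromBlocks_apply₂₁,
      Matrix.fromBlocks_apply₂₂, Fin.sum_univ_two, Fin.sum_univ_three, Matrix.one_apply,
      hKv, Pauli]
  · ring_nf
    simp only [Complex.I_sq, hI3, hI4, show (1:ℝ)+q = q+1 from add_comm 1 q,
      show (2:ℝ)+q = q+2 from add_comm 2 q, show (3:ℝ)+q = q+3 from add_comm 3 q]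
    linear_combination (-((c:ℂ)*((k:ℂ)*(Complex.exp (-((k:ℂ) * ((‖x‖:ℝ):ℂ))) / ((‖x‖ ^ (q+2) : ℝ) : ℂ)) + ((q:ℂ)+1)*(Complex.exp (-((k:ℂ) * ((‖x‖:ℝ):ℂ))) / ((‖x‖ ^ (q+3) : ℝ) : ℂ)))) * C 0) * hxsC
      + (-((ν:ℂ)) * C 0) * hdiv1
      + (-((c:ℂ)*((q:ℂ)+1)*((‖x‖:ℝ):ℂ)) * C 0) * hU43
      + (-((c:ℂ)*(k:ℂ)*((‖x‖:ℝ):ℂ) + (c:ℂ)*((q:ℂ)+1)) * C 0) * hU32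
      + (-((c:ℂ)*(k:ℂ)) * C 0) * hU21
      + ((Complex.exp (-((k:ℂ) * ((‖x‖:ℝ):ℂ))) / ((‖x‖ ^ (q+1) : ℝ) : ℂ)) * C 0) * hc2qC
      + (-(Complex.exp (-((k:ℂ) * ((‖x‖:ℝ):ℂ))) / ((‖x‖ ^ q : ℝ) : ℂ)) * C 0) * hckC
  · ring_nf
    simp only [Complex.I_sq, hI3, hI4, show (1:ℝ)+q = q+1 from add_comm 1 q,
      show (2:ℝ)+q = q+2 from add_comm 2 q, show (3:ℝ)+q = q+3 from add_comm 3 q]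
    linear_combination (-((c:ℂ)*((k:ℂ)*(Complex.exp (-((k:ℂ) * ((‖x‖:ℝ):ℂ))) / ((‖x‖ ^ (q+2) : ℝ) : ℂ)) + ((q:ℂ)+1)*(Complex.exp (-((k:ℂ) * ((‖x‖:ℝ):ℂ))) / ((‖x‖ ^ (q+3) : ℝ) : ℂ)))) * C 1) * hxsC
      + (-((ν:ℂ)) * C 1) * hdiv1
      + (-((c:ℂ)*((q:ℂ)+1)*((‖x‖:ℝ):ℂ)) * C 1) * hU43
      + (-((c:ℂ)*(k:ℂ)*((‖x‖:ℝ):ℂ) + (c:ℂ)*((q:ℂ)+1)) * C 1) * hU32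
      + (-((c:ℂ)*(k:ℂ)) * C 1) * hU21
      + ((Complex.exp (-((k:ℂ) * ((‖x‖:ℝ):ℂ))) / ((‖x‖ ^ (q+1) : ℝ) : ℂ)) * C 1) * hc2qC
      + (-(Complex.exp (-((k:ℂ) * ((‖x‖:ℝ):ℂ))) / ((‖x‖ ^ q : ℝ) : ℂ)) * C 1) * hckC
  · ring_nf
    simp only [Complex.I_sq, hI3, hI4, show (1:ℝ)+q = q+1 from add_comm 1 q,
      show (2:ℝ)+q = q+2 from add_comm 2 q, show (3:ℝ)+q = q+3 from add_comm 3 q]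
    linear_combination (-(Complex.exp (-((k:ℂ) * ((‖x‖:ℝ):ℂ))) / ((‖x‖ ^ (q+1) : ℝ) : ℂ)) * (Complex.I * ((x 0 : ℝ):ℂ) * C 1 + ((x 1 : ℝ):ℂ) * C 1 + Complex.I * ((x 2 : ℝ):ℂ) * C 0)) * hcmaC + (-(Complex.exp (-((k:ℂ) * ((‖x‖:ℝ):ℂ))) / ((‖x‖ ^ (q+2) : ℝ) : ℂ)) * (Complex.I * ((x 0 : ℝ):ℂ) * C 1 + ((x 1 : ℝ):ℂ) * C 1 + Complex.I * ((x 2 : ℝ):ℂ) * C 0)) * hcνC + (-((c:ℂ)*(ν:ℂ)) * (Complex.I * ((x 0 : ℝ):ℂ) * C 1 + ((x 1 : ℝ):ℂ) * C 1 + Complex.I * ((x 2 : ℝ):ℂ) * C 0)) * hdiv2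
  · ring_nf
    simp only [Complex.I_sq, hI3, hI4, show (1:ℝ)+q = q+1 from add_comm 1 q,
      show (2:ℝ)+q = q+2 from add_comm 2 q, show (3:ℝ)+q = q+3 from add_comm 3 q]
    linear_combination (-(Complex.exp (-((k:ℂ) * ((‖x‖:ℝ):ℂ))) / ((‖x‖ ^ (q+1) : ℝ) : ℂ)) * (Complex.I * ((x 0 : ℝ):ℂ) * C 0 - ((x 1 : ℝ):ℂ) * C 0 - Complex.I * ((x 2 : ℝ):ℂ) * C 1)) * hcmaC + (-(Complex.exp (-((k:ℂ) * ((‖x‖:ℝ):ℂ))) / ((‖x‖ ^ (q+2) : ℝ) : ℂ)) * (Complex.I * ((x 0 : ℝ):ℂ) * C 0 - ((x 1 : ℝ):ℂ) * C 0 - Complex.I * ((x 2 : ℝ):ℂ) * C 1)) * hcνC + (-((c:ℂ)*(ν:ℂ)) * (Complex.I * ((x 0 : ℝ):ℂ) * C 0 - ((x 1 : ℝ):ℂ) * C 0 - Complex.I * ((x 2 : ℝ):ℂ) * C 1)) * hdiv2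
end
end

section
/- Let 0 < ν < 1, N = √((1−√(1−ν²))/(1+√(1−ν²))), and let W(x) be a 2×2 Hermitian matrix for each x ≠ 0. Define the 4×4 Hermitian matrix V(x) = −(ν/|x|) I₄ + [[N² (σ·x̂) W(x) (σ·x̂), i N (σ·x̂) W(x)],[−i N W(x) (σ·x̂), W(x)]]. Then the operator norm bound |x| |V(x)| ≤ ν holds if and only if every eigenvalue λ of W(x) satisfies 0 ≤ λ ≤ (ν/|x|)(1 + √(1−ν²)). -/
open Matrix

noncomputable section

/-- The constant `N = √((1-√(1-ν²))/(1+√(1-ν²)))`. -/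
def Nnu (ν : ℝ) : ℝ :=
  Real.sqrt ((1 - Real.sqrt (1 - ν ^ 2)) / (1 + Real.sqrt (1 - ν ^ 2)))

/-- The rigidity potential `V = -(ν/|x|)I₄ + [[N² σx̂ W σx̂, iN σx̂ W], [-iN W σx̂, W]]`. -/
def rigidV (ν : ℝ) (x : EuclideanSpace ℝ (Fin 3)) (W : Matrix (Fin 2) (Fin 2) ℂ) :
    Matrix (Fin 2 ⊕ Fin 2) (Fin 2 ⊕ Fin 2) ℂ :=
  (-(ν / ‖x‖ : ℝ) : ℂ) • 1 +
    Matrix.fromBlocks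
      (((Nnu ν : ℝ) ^ 2 : ℂ) • (sigmaHat x * W * sigmaHat x))
      ((Complex.I * (Nnu ν : ℝ)) • (sigmaHat x * W))
      ((-Complex.I * (Nnu ν : ℝ)) • (W * sigmaHat x))
      W

section RigAux

lemma rig_sigmaHat_eq (x : EuclideanSpace ℝ (Fin 3)) :
    sigmaHat x = !![((x 2 / ‖x‖ : ℝ) : ℂ), ((x 0 / ‖x‖ : ℝ) : ℂ) - Complex.I * ((x 1 / ‖x‖ : ℝ) : ℂ);
      ((x 0 / ‖x‖ : ℝ) : ℂ) + Complex.I * ((x 1 / ‖x‖ : ℝ) : ℂ), -((x 2 / ‖x‖ : ℝ) : ℂ)] := by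
  simp [sigmaHat, Pauli, Fin.sum_univ_three]
  constructor <;> ring

lemma rig_sigmaHat_herm (x : EuclideanSpace ℝ (Fin 3)) : (sigmaHat x)ᴴ = sigmaHat x := by
  rw [rig_sigmaHat_eq]
  ext i j
  fin_cases i <;> fin_cases j <;> simp [Matrix.conjTranspose_apply] <;> ring

lemma rig_norm_hat (x : EuclideanSpace ℝ (Fin 3)) (hx : x ≠ 0) :
    (x 0 / ‖x‖)^2 + (x 1 / ‖x‖)^2 + (x 2 / ‖x‖)^2 = 1 := by
  have h : ‖x‖ ^ 2 = ∑ i, x i ^ 2 := by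
    rw [EuclideanSpace.norm_eq]
    rw [Real.sq_sqrt (by positivity)]
    simp [sq_abs]
  have hn : ‖x‖ ≠ 0 := by simpa using hx
  simp only [Fin.sum_univ_three] at h
  field_simp
  linarith [h]

lemma rig_sigmaHat_sq (x : EuclideanSpace ℝ (Fin 3)) (hx : x ≠ 0) :
    sigmaHat x * sigmaHat x = 1 := by
  have h := rig_norm_hat x hx
  have h' : (((x 0 : ℝ) : ℂ) / (‖x‖:ℂ))^2 + (((x 1 : ℝ) : ℂ) / (‖x‖:ℂ))^2
      + (((x 2 : ℝ) : ℂ) / (‖x‖:ℂ))^2 = 1 := by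
    have := congrArg (fun r : ℝ => (r : ℂ)) h
    push_cast at this
    convert this using 2
  rw [rig_sigmaHat_eq]
  ext i j
  fin_cases i <;> fin_cases j
  · simp [Matrix.mul_apply, Fin.sum_univ_two, Matrix.one_apply]
    linear_combination h' - (((x 1 : ℝ) : ℂ)^2 / ((‖x‖ : ℝ) : ℂ)^2) * Complex.I_sq
  · simp [Matrix.mul_apply, Fin.sum_univ_two, Matrix.one_apply]
    ring
  · simp [Matrix.mul_apply, Fin.sum_univ_two, Matrix.one_apply]
    ring
  · simp [Matrix.mul_apply, Fin.sum_univ_two, Matrix.one_apply]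
    linear_combination h' - (((x 1 : ℝ) : ℂ)^2 / ((‖x‖ : ℝ) : ℂ)^2) * Complex.I_sq

lemma rig_Mct (N : ℝ) (S : Matrix (Fin 2) (Fin 2) ℂ) :
    (fromRows ((Complex.I * (N:ℂ)) • S) (1 : Matrix (Fin 2) (Fin 2) ℂ))ᴴ
    = fromCols ((-Complex.I * (N:ℂ)) • Sᴴ) 1 := by
  rw [conjTranspose_fromRows_eq_fromCols_conjTranspose]
  rw [conjTranspose_smul]
  congr 1
  all_goals simp

lemma rig_MWM (N : ℝ) (S W : Matrix (Fin 2) (Fin 2) ℂ) (hS : Sᴴ = S) :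
    (fromRows ((Complex.I * (N:ℂ)) • S) (1 : Matrix (Fin 2) (Fin 2) ℂ)) * W *
      (fromRows ((Complex.I * (N:ℂ)) • S) (1 : Matrix (Fin 2) (Fin 2) ℂ))ᴴ
    = fromBlocks (((N:ℂ)^2) • (S*W*S)) ((Complex.I*(N:ℂ)) • (S*W))
        ((-Complex.I*(N:ℂ)) • (W*S)) W := by
  rw [rig_Mct, hS, fromRows_mul, fromRows_mul_fromCols]
  have hI : Complex.I * (N:ℂ) * (-Complex.I * (N:ℂ)) = (N:ℂ)^2 := by
    linear_combination -(N:ℂ)^2 * Complex.I_sq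
  have hI' : -Complex.I * (N:ℂ) * (Complex.I * (N:ℂ)) = (N:ℂ)^2 := by
    linear_combination -(N:ℂ)^2 * Complex.I_sq
  simp only [Matrix.smul_mul, Matrix.mul_smul, smul_smul, hI, hI', Matrix.mul_one, Matrix.one_mul]

lemma rig_MM (N : ℝ) (S : Matrix (Fin 2) (Fin 2) ℂ) (hS : Sᴴ = S) (hS2 : S * S = 1) :
    (fromRows ((Complex.I * (N:ℂ)) • S) (1 : Matrix (Fin 2) (Fin 2) ℂ))ᴴ *
      (fromRows ((Complex.I * (N:ℂ)) • S) (1 : Matrix (Fin 2) (Fin 2) ℂ))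
    = (((N^2+1 : ℝ)):ℂ) • 1 := by
  rw [rig_Mct, hS, fromCols_mul_fromRows]
  rw [Matrix.smul_mul, Matrix.mul_smul, smul_smul, hS2, Matrix.mul_one]
  have hI : -Complex.I * (N:ℂ) * (Complex.I * (N:ℂ)) = (N:ℂ)^2 := by
    linear_combination -(N:ℂ)^2 * Complex.I_sq
  rw [hI]
  push_cast
  rw [add_smul, one_smul]

variable {m n : Type*} [Fintype m] [Fintype n] [DecidableEq m] [DecidableEq n]

lemma rig_dot_conj (M : Matrix m n ℂ) (A : Matrix n n ℂ) (u : m → ℂ) :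
    dotProduct (star u) ((M * A * Mᴴ) *ᵥ u)
      = dotProduct (star (Mᴴ *ᵥ u)) (A *ᵥ (Mᴴ *ᵥ u)) := by
  have h : star (Mᴴ *ᵥ u) = star u ᵥ* M := by
    rw [star_mulVec, conjTranspose_conjTranspose]
  rw [h, ← dotProduct_mulVec, mulVec_mulVec, mulVec_mulVec]

lemma rig_dot_self_conj (M : Matrix m n ℂ) (z : n → ℂ) :
    dotProduct (star (M *ᵥ z)) (M *ᵥ z)
      = dotProduct (star z) ((Mᴴ * M) *ᵥ z) := by
  rw [star_mulVec, ← dotProduct_mulVec, mulVec_mulVec]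

lemma rig_dot_re {ι : Type*} [Fintype ι] (w : ι → ℂ) :
    (dotProduct (star w) w).re = ∑ i, ‖w i‖ ^ 2 := by
  simp [dotProduct, Complex.sq_norm, Complex.normSq_apply]

lemma rig_conj_mul_real_re (r : ℝ) (z : ℂ) :
    ((starRingEnd ℂ) z * ((r:ℂ) * z)).re = r * ‖z‖ ^ 2 := by
  simp [Complex.mul_re, Complex.sq_norm, Complex.normSq_apply]
  ring

lemma rig_diag_dot_re (d : n → ℝ) (w : n → ℂ) :
    (dotProduct (star w) ((Matrix.diagonal (fun i => ((d i : ℝ):ℂ))) *ᵥ w)).re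
      = ∑ i, d i * ‖w i‖^2 := by
  simp only [dotProduct, Matrix.mulVec_diagonal, Pi.star_apply, Complex.re_sum]
  exact Finset.sum_congr rfl fun i _ => rig_conj_mul_real_re (d i) (w i)

lemma rig_dot_sq (W : Matrix n n ℂ) (hW : Wᴴ = W) (z : n → ℂ) :
    dotProduct (star z) ((W * W) *ᵥ z)
      = dotProduct (star (W *ᵥ z)) (W *ᵥ z) := by
  rw [rig_dot_self_conj, hW]

lemma rig_quad_eq (c k : ℝ) (M : Matrix m n ℂ) (W : Matrix n n ℂ) (hW : Wᴴ = W)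
    (hMM : Mᴴ * M = ((k:ℝ):ℂ) • 1) (u : m → ℂ) :
    ∑ i, ‖((((c:ℝ):ℂ) • 1 + M * W * Mᴴ) *ᵥ u) i‖^2
      = c^2 * ∑ i, ‖u i‖^2
        + 2*c * (dotProduct (star (Mᴴ *ᵥ u)) (W *ᵥ (Mᴴ *ᵥ u))).re
        + k * ∑ i, ‖(W *ᵥ (Mᴴ *ᵥ u)) i‖^2 := by
  set B := M * W * Mᴴ with hBdef
  have hB : Bᴴ = B := by
    rw [hBdef, conjTranspose_mul, conjTranspose_mul, conjTranspose_conjTranspose, hW,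
      Matrix.mul_assoc]
  have hBB : B * B = ((k:ℝ):ℂ) • (M * (W * W) * Mᴴ) := by
    rw [hBdef]
    calc M * W * Mᴴ * (M * W * Mᴴ) = M * W * (Mᴴ * M) * W * Mᴴ := by
          simp only [Matrix.mul_assoc]
      _ = ((k:ℝ):ℂ) • (M * (W * W) * Mᴴ) := by
          rw [hMM, Matrix.mul_smul, Matrix.mul_one, Matrix.smul_mul, Matrix.smul_mul]
          simp only [Matrix.mul_assoc]
  have h1 : (((c:ℝ):ℂ) • 1 + B) *ᵥ u = ((c:ℝ):ℂ) • u + B *ᵥ u := by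
    rw [add_mulVec, smul_mulVec, one_mulVec]
  have p2 : dotProduct (star u) (B *ᵥ u)
      = dotProduct (star (Mᴴ *ᵥ u)) (W *ᵥ (Mᴴ *ᵥ u)) := rig_dot_conj M W u
  have p3 : dotProduct (star (B *ᵥ u)) u
      = dotProduct (star (Mᴴ *ᵥ u)) (W *ᵥ (Mᴴ *ᵥ u)) := by
    rw [star_mulVec, hB, ← dotProduct_mulVec]
    exact p2
  have p4 : dotProduct (star (B *ᵥ u)) (B *ᵥ u)
      = ((k:ℝ):ℂ) * dotProduct (star (W *ᵥ (Mᴴ *ᵥ u))) (W *ᵥ (Mᴴ *ᵥ u)) := by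
    rw [rig_dot_self_conj, hB, hBB, smul_mulVec, dotProduct_smul, smul_eq_mul]
    congr 1
    rw [rig_dot_conj, rig_dot_sq W hW]
  have key : dotProduct (star ((((c:ℝ):ℂ) • 1 + B) *ᵥ u)) ((((c:ℝ):ℂ) • 1 + B) *ᵥ u)
      = ((c^2:ℝ):ℂ) * dotProduct (star u) u
        + ((2*c:ℝ):ℂ) * dotProduct (star (Mᴴ *ᵥ u)) (W *ᵥ (Mᴴ *ᵥ u))
        + ((k:ℝ):ℂ) * dotProduct (star (W *ᵥ (Mᴴ *ᵥ u))) (W *ᵥ (Mᴴ *ᵥ u)) := by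
    rw [h1, star_add, star_smul]
    simp only [add_dotProduct, dotProduct_add, smul_dotProduct, dotProduct_smul, smul_eq_mul,
      Complex.star_def, Complex.conj_ofReal]
    rw [p2, p3, p4]
    push_cast
    ring
  have lhs : ∑ i, ‖((((c:ℝ):ℂ) • 1 + B) *ᵥ u) i‖^2
      = (dotProduct (star ((((c:ℝ):ℂ) • 1 + B) *ᵥ u)) ((((c:ℝ):ℂ) • 1 + B) *ᵥ u)).re :=
    (rig_dot_re _).symm
  rw [lhs, key]
  simp only [Complex.add_re, Complex.re_ofReal_mul, rig_dot_re]

lemma rig_spec_dot (W : Matrix n n ℂ) (hW : W.IsHermitian) (v : n → ℂ) :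
    (dotProduct (star v) (W *ᵥ v)).re
      = ∑ i, hW.eigenvalues i * ‖((hW.eigenvectorUnitary : Matrix n n ℂ)ᴴ *ᵥ v) i‖^2 := by
  set U := (hW.eigenvectorUnitary : Matrix n n ℂ) with hU
  have hsp : W = U * Matrix.diagonal (fun i => ((hW.eigenvalues i : ℝ):ℂ)) * Uᴴ := by
    have := hW.spectral_theorem
    rw [← Matrix.star_eq_conjTranspose]
    exact this
  conv_lhs => rw [hsp, rig_dot_conj]
  exact rig_diag_dot_re _ _

lemma rig_spec_normsq (W : Matrix n n ℂ) (hW : W.IsHermitian) (v : n → ℂ) :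
    ∑ i, ‖(W *ᵥ v) i‖^2
      = ∑ i, (hW.eigenvalues i)^2 * ‖((hW.eigenvectorUnitary : Matrix n n ℂ)ᴴ *ᵥ v) i‖^2 := by
  set U := (hW.eigenvectorUnitary : Matrix n n ℂ) with hU
  have hUU : Uᴴ * U = 1 := by
    rw [← Matrix.star_eq_conjTranspose]
    exact Matrix.mem_unitaryGroup_iff'.mp hW.eigenvectorUnitary.2
  have hsp : W = U * Matrix.diagonal (fun i => ((hW.eigenvalues i : ℝ):ℂ)) * Uᴴ := by
    have := hW.spectral_theorem
    rw [← Matrix.star_eq_conjTranspose]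
    exact this
  have hWW : W * W = U * Matrix.diagonal (fun i => (((hW.eigenvalues i)^2 : ℝ):ℂ)) * Uᴴ := by
    conv_lhs => rw [hsp]
    rw [show ∀ D : Matrix n n ℂ, (U * D * Uᴴ) * (U * D * Uᴴ) = U * (D * (Uᴴ * U) * D) * Uᴴ from
      fun D => by simp only [Matrix.mul_assoc]]
    rw [hUU, Matrix.mul_one, Matrix.diagonal_mul_diagonal]
    congr 1
    congr 1
    funext i
    push_cast
    ring
  rw [← rig_dot_re, rig_dot_self_conj, hW.eq, hWW, rig_dot_conj]
  exact rig_diag_dot_re _ _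

end RigAux

set_option maxHeartbeats 1000000 in
/-- **Operator norm bound for the rigidity potentials.** For `0 < ν < 1`, `x ≠ 0` and a
Hermitian `2×2` matrix `W`, the bound `|x||V(x)| ≤ ν` holds if and only if every
eigenvalue `λ` of `W` satisfies `0 ≤ λ ≤ (ν/|x|)(1 + √(1-ν²))`. -/
theorem stmt_18 (ν : ℝ) (hν : 0 < ν ∧ ν < 1) (x : EuclideanSpace ℝ (Fin 3)) (hx : x ≠ 0)
    (W : Matrix (Fin 2) (Fin 2) ℂ) (hW : W.IsHermitian) :
    (∀ u : (Fin 2 ⊕ Fin 2) → ℂ,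
        ‖x‖ ^ 2 * ∑ i, ‖(rigidV ν x W).mulVec u i‖ ^ 2 ≤ ν ^ 2 * ∑ i, ‖u i‖ ^ 2)
      ↔ ∀ i, 0 ≤ hW.eigenvalues i ∧
          hW.eigenvalues i ≤ (ν / ‖x‖) * (1 + Real.sqrt (1 - ν ^ 2)) := by
  obtain ⟨hν0, hν1⟩ := hν
  have hxn : (0:ℝ) < ‖x‖ := norm_pos_iff.mpr hx
  set μ := ν / ‖x‖ with hμdef
  have hμ0 : 0 < μ := div_pos hν0 hxn
  set s := Real.sqrt (1 - ν^2) with hsdef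
  have hν2 : 0 ≤ 1 - ν^2 := by nlinarith
  have hs0 : 0 ≤ s := Real.sqrt_nonneg _
  have hs1 : s ≤ 1 := by
    have h := Real.sqrt_le_sqrt (show 1 - ν^2 ≤ 1 by nlinarith)
    rw [Real.sqrt_one] at h
    rw [hsdef]
    exact h
  have h1s : (0:ℝ) < 1 + s := by linarith
  have hN2 : (Nnu ν)^2 = (1-s)/(1+s) := by
    rw [Nnu, ← hsdef]
    exact Real.sq_sqrt (div_nonneg (by linarith) (by linarith))
  set k := (Nnu ν)^2 + 1 with hkdef
  have hk0 : (0:ℝ) < k := by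
    rw [hkdef]; nlinarith [sq_nonneg (Nnu ν)]
  have hk2 : k * (1 + s) = 2 := by
    rw [hkdef, hN2]
    field_simp
    norm_num
  -- the matrices
  set S := sigmaHat x with hSdef
  have hSh : Sᴴ = S := rig_sigmaHat_herm x
  have hS2 : S * S = 1 := rig_sigmaHat_sq x hx
  set M := fromRows ((Complex.I * ((Nnu ν : ℝ):ℂ)) • S) (1 : Matrix (Fin 2) (Fin 2) ℂ) with hMdef
  have hMM : Mᴴ * M = ((k:ℝ):ℂ) • 1 := by
    rw [hMdef, hkdef]
    exact rig_MM (Nnu ν) S hSh hS2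
  have hV : rigidV ν x W = ((-μ : ℝ):ℂ) • 1 + M * W * Mᴴ := by
    rw [rigidV, hMdef, rig_MWM (Nnu ν) S W hSh, ← hSdef, hμdef]
    congr 1
    push_cast
    ring_nf
  have hWe : Wᴴ = W := hW.eq
  -- quadratic form identity
  have hquad : ∀ u : (Fin 2 ⊕ Fin 2) → ℂ,
      ∑ i, ‖(rigidV ν x W).mulVec u i‖^2
        = μ^2 * ∑ i, ‖u i‖^2
          - 2*μ * (dotProduct (star (Mᴴ *ᵥ u)) (W *ᵥ (Mᴴ *ᵥ u))).re
          + k * ∑ i, ‖(W *ᵥ (Mᴴ *ᵥ u)) i‖^2 := by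
    intro u
    have := rig_quad_eq (-μ) k M W hWe hMM u
    push_cast at this
    rw [show ∑ i, ‖(rigidV ν x W).mulVec u i‖^2
        = ∑ i, ‖(((-μ : ℝ):ℂ) • 1 + M * W * Mᴴ).mulVec u i‖^2 by rw [hV]]
    push_cast
    rw [this]
    ring
  -- condition C2
  have hC1_iff_C2 : (∀ u : (Fin 2 ⊕ Fin 2) → ℂ,
        ‖x‖ ^ 2 * ∑ i, ‖(rigidV ν x W).mulVec u i‖ ^ 2 ≤ ν ^ 2 * ∑ i, ‖u i‖ ^ 2)
      ↔ (∀ v : Fin 2 → ℂ,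
        k * ∑ i, ‖(W *ᵥ v) i‖^2 ≤ 2*μ * (dotProduct (star v) (W *ᵥ v)).re) := by
    have hν2eq : ν^2 = ‖x‖^2 * μ^2 := by
      rw [hμdef]
      field_simp
    have hper : ∀ u : (Fin 2 ⊕ Fin 2) → ℂ,
        (‖x‖ ^ 2 * ∑ i, ‖(rigidV ν x W).mulVec u i‖ ^ 2 ≤ ν ^ 2 * ∑ i, ‖u i‖ ^ 2)
        ↔ (k * ∑ i, ‖(W *ᵥ (Mᴴ *ᵥ u)) i‖^2
            ≤ 2*μ * (dotProduct (star (Mᴴ *ᵥ u)) (W *ᵥ (Mᴴ *ᵥ u))).re) := by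
      intro u
      rw [show ((rigidV ν x W).mulVec u) = ((rigidV ν x W) *ᵥ u) from rfl]
      rw [hquad u, hν2eq]
      constructor <;> intro h <;> nlinarith [h, mul_pos hxn hxn]
    constructor
    · intro hL v
      have huv : Mᴴ *ᵥ (M *ᵥ (((k:ℝ):ℂ)⁻¹ • v)) = v := by
        rw [mulVec_mulVec, hMM, smul_mulVec, one_mulVec, smul_smul]
        rw [show ((k:ℝ):ℂ) * ((k:ℝ):ℂ)⁻¹ = 1 from
          mul_inv_cancel₀ (by exact_mod_cast ne_of_gt hk0)]
        rw [one_smul]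
      have h := (hper (M *ᵥ (((k:ℝ):ℂ)⁻¹ • v))).mp (hL _)
      rw [huv] at h
      exact h
    · intro hC u
      exact (hper u).mpr (hC (Mᴴ *ᵥ u))
  rw [hC1_iff_C2]
  -- condition C3
  set U := (hW.eigenvectorUnitary : Matrix (Fin 2) (Fin 2) ℂ) with hUdef
  have hUU : Uᴴ * U = 1 := by
    rw [← Matrix.star_eq_conjTranspose]
    exact Matrix.mem_unitaryGroup_iff'.mp hW.eigenvectorUnitary.2
  have hC2_iff_C3 : (∀ v : Fin 2 → ℂ,
        k * ∑ i, ‖(W *ᵥ v) i‖^2 ≤ 2*μ * (dotProduct (star v) (W *ᵥ v)).re)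
      ↔ (∀ i, k * (hW.eigenvalues i)^2 ≤ 2*μ * hW.eigenvalues i) := by
    constructor
    · intro hC i
      have hv := hC (U *ᵥ (fun j => if j = i then (1:ℂ) else 0))
      rw [rig_spec_normsq W hW, rig_spec_dot W hW] at hv
      rw [← hUdef, mulVec_mulVec, hUU, one_mulVec] at hv
      have hsingle : ∀ (f : Fin 2 → ℝ),
          ∑ j, f j * ‖(fun j => if j = i then (1:ℂ) else 0) j‖^2 = f i := by
        intro f
        rw [Finset.sum_eq_single i]
        · simp
        · intro b _ hb
          simp [hb]
        · simp
      rw [hsingle, hsingle] at hv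
      exact hv
    · intro hC v
      rw [rig_spec_normsq W hW, rig_spec_dot W hW, ← hUdef, Finset.mul_sum, Finset.mul_sum]
      apply Finset.sum_le_sum
      intro i _
      have h1 := hC i
      have h2 : (0:ℝ) ≤ ‖(Uᴴ *ᵥ v) i‖^2 := sq_nonneg _
      nlinarith [h1, h2]
  rw [hC2_iff_C3]
  -- final arithmetic equivalence
  clear_value μ s k
  apply forall_congr'
  intro i
  have hfin : ∀ lam : ℝ, (k * lam^2 ≤ 2*μ*lam) ↔ (0 ≤ lam ∧ lam ≤ μ * (1+s)) := by
    intro lam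
    constructor
    · intro h
      have hl0 : 0 ≤ lam := by
        by_contra hc
        push_neg at hc
        have h1 : 2*μ*lam < 0 := by
          apply mul_neg_of_pos_of_neg
          · linarith
          · exact hc
        nlinarith [mul_pos hk0 (mul_pos_of_neg_of_neg hc hc)]
      refine ⟨hl0, ?_⟩
      rcases eq_or_lt_of_le hl0 with he | hpos
      · rw [← he]
        positivity
      · nlinarith [mul_le_mul_of_nonneg_right h (le_of_lt h1s), hk2, hpos]
    · rintro ⟨h0, h1⟩
      have hkl : k * lam ≤ 2*μ := by
        nlinarith [mul_le_mul_of_nonneg_left h1 (le_of_lt hk0), hk2]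
      nlinarith [mul_le_mul_of_nonneg_right hkl h0]
  exact hfin (hW.eigenvalues i)
end
end
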